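/- arXiv:2212.00366 — 2 statements merged into one kernel-verified Lean document; each statement's English description precedes it below -/
import Mathlib

section
/- Let k ≥ 1 and q > 2 be natural numbers, and let K ⊂ ℂ be a number field such that K(ζ_{φ(q)}) ∩ ℚ(ζ_q) = ℚ. Then the numbers L(2k+1, χ), where χ ranges over the Dirichlet characters modulo q with χ(−1) = −1, are linearly independent over K(ζ_{φ(q)}). -/
open scoped Real

/-- The value `L(k, χ) = ∑_{n ≥ 1} χ(n)/n^k` of the Dirichlet `L`-function of `χ`. -/
noncomputable def Lval (q : ℕ) (χ : DirichletCharacter ℂ q) (k : ℕ) : ℂ :=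
  ∑' n : ℕ, χ (n : ZMod q) / (n : ℂ) ^ k

namespace OkadaAux

open Complex Polynomial Finset IntermediateField

noncomputable def zq (q : ℕ) : ℂ := Complex.exp (2 * Real.pi * Complex.I / q)

variable {q : ℕ} [NeZero q]

lemma hzq : IsPrimitiveRoot (zq q) q := Complex.isPrimitiveRoot_exp q (NeZero.ne q)

lemma zq_pow_mod (n : ℕ) : zq q ^ n = zq q ^ (n % q) := by
  conv_lhs => rw [← Nat.div_add_mod n q]
  rw [pow_add, pow_mul, hzq.pow_eq_one, one_pow, one_mul]

noncomputable def e (a : ZMod q) : ℂ := zq q ^ a.val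

lemma zq_pow_natCast (n : ℕ) : zq q ^ n = e ((n : ZMod q)) := by
  rw [e, ZMod.val_natCast, zq_pow_mod]

lemma e_natCast_val (a : ZMod q) : e a = zq q ^ a.val := rfl

lemma e_mul (a b : ZMod q) : e (a * b) = e a ^ b.val := by
  have h1 : e a ^ b.val = zq q ^ (a.val * b.val) := by rw [e_natCast_val, ← pow_mul]
  have : a * b = ((a.val * b.val : ℕ) : ZMod q) := by
    push_cast [ZMod.natCast_val, ZMod.cast_id]; ring
  rw [h1, zq_pow_natCast, ← this]

lemma e_add (a b : ZMod q) : e (a + b) = e a * e b := by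
  rw [e_natCast_val a, e_natCast_val b, ← pow_add, zq_pow_mod (a.val + b.val)]
  have : a + b = ((a.val + b.val : ℕ) : ZMod q) := by push_cast [ZMod.natCast_val, ZMod.cast_id]; ring
  rw [e, this, ZMod.val_natCast]

lemma e_zero : e (0 : ZMod q) = 1 := by
  rw [e, ZMod.val_zero, pow_zero]

lemma e_neg_mul (a : ZMod q) : e (-a) * e a = 1 := by
  rw [← e_add, neg_add_cancel, e_zero]

lemma norm_e (a : ZMod q) : ‖e a‖ = 1 := by
  have h1 : ‖zq q‖ = 1 := by
    have : (2 * Real.pi * Complex.I / q) = ((2 * Real.pi / q : ℝ) : ℂ) * Complex.I := by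
      push_cast; ring
    rw [zq, this, Complex.norm_exp_ofReal_mul_I]
  rw [e, norm_pow, h1, one_pow]

lemma e_ne_zero (a : ZMod q) : e a ≠ 0 := by
  intro h; simpa [h] using norm_e a

/-- sum over `ZMod q` as sum over `range q` -/
lemma sum_zmod (f : ZMod q → ℂ) : ∑ j : ZMod q, f j = ∑ i ∈ Finset.range q, f (i : ZMod q) := by
  refine Finset.sum_nbij' (fun (j : ZMod q) => j.val) (fun (i : ℕ) => (i : ZMod q))
    ?_ ?_ ?_ ?_ ?_
  · intro a _; exact Finset.mem_range.mpr (ZMod.val_lt a)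
  · intro a _; exact Finset.mem_univ _
  · intro a _; exact ZMod.natCast_rightInverse a
  · intro a ha; exact ZMod.val_natCast_of_lt (Finset.mem_range.mp ha)
  · intro a _; exact congrArg f (ZMod.natCast_rightInverse a).symm

lemma sum_e (m : ZMod q) : ∑ j : ZMod q, e (j * m) = if m = 0 then (q : ℂ) else 0 := by
  split_ifs with hm
  · subst hm; simp only [mul_zero, e_zero]; simp
  · have hx : e m ≠ 1 := by
      rw [e_natCast_val]
      intro h
      have hdvd := (hzq.pow_eq_one_iff_dvd m.val).mp h
      have hlt := ZMod.val_lt m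
      have hv : m.val = 0 := by
        rcases hdvd with ⟨c, hc⟩
        rcases Nat.eq_zero_or_pos c with h0 | h0
        · simp [hc, h0]
        · exfalso; nlinarith [Nat.one_le_iff_ne_zero.mpr (NeZero.ne q)]
      exact hm ((ZMod.val_eq_zero m).mp hv)
    have key : (∑ j : ZMod q, e (j * m)) * (e m - 1) = 0 := by
      have : ∀ j : ZMod q, e (j * m) = (e m) ^ j.val := by
        intro j; rw [mul_comm, e_mul]
      simp_rw [this]
      rw [sum_zmod (fun j => e m ^ (j : ZMod q).val)]
      have : ∀ i ∈ Finset.range q, e m ^ ((i : ZMod q)).val = e m ^ i := by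
        intro i hi; rw [ZMod.val_natCast_of_lt (Finset.mem_range.mp hi)]
      rw [Finset.sum_congr rfl this, geom_sum_mul, e_natCast_val, ← pow_mul, mul_comm,
        pow_mul, hzq.pow_eq_one, one_pow, sub_self]
    rcases mul_eq_zero.mp key with h | h
    · exact h
    · exact absurd (sub_eq_zero.mp h) hx

lemma summable_aux {s : ℕ} (hs2 : 2 ≤ s) (c : ℕ → ℂ) (hc : ∀ n, ‖c n‖ ≤ 1) :
    Summable (fun n : ℕ => c n / (n : ℂ) ^ s) := by
  refine Summable.of_norm_bounded (g := fun n : ℕ => 1 / (n : ℝ) ^ 2)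
    (Real.summable_one_div_nat_pow.mpr one_lt_two) (fun n => ?_)
  rcases Nat.eq_zero_or_pos n with rfl | hn
  · simp [zero_pow (by omega : s ≠ 0)]
  · rw [norm_div, norm_pow, Complex.norm_natCast]
    have h1 : (1:ℝ) ≤ (n:ℝ) := by exact_mod_cast hn
    have h2 : (0:ℝ) < (n:ℝ)^2 := by positivity
    have h3 : (n:ℝ)^2 ≤ (n:ℝ)^s := pow_le_pow_right₀ h1 hs2
    calc ‖c n‖ / (n:ℝ)^s ≤ 1 / (n:ℝ)^s :=
          div_le_div_of_nonneg_right (hc n) (by positivity) |>.trans_eq rfl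
    _ ≤ 1 / (n:ℝ)^2 := one_div_le_one_div_of_le h2 h3

noncomputable def Ej (q s : ℕ) [NeZero q] (j : ZMod q) : ℂ :=
  ∑' n : ℕ, e (j * (n : ZMod q)) / (n : ℂ) ^ s

lemma summable_Ej {s : ℕ} (hs2 : 2 ≤ s) (j : ZMod q) :
    Summable (fun n : ℕ => e (j * (n : ZMod q)) / (n : ℂ) ^ s) :=
  summable_aux hs2 _ (fun n => le_of_eq (norm_e _))

lemma e_eq_inv_of_neg (a : ZMod q) : e (-a) = (e a)⁻¹ := by
  refine eq_inv_of_mul_eq_one_left ?_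
  rw [← e_add, neg_add_cancel, e_zero]

lemma fourier_eq_e (j : ZMod q) (n : ℕ) :
    (fourier n ((j.val / q : ℝ) : UnitAddCircle)) = e (j * (n : ZMod q)) := by
  rw [fourier_coe_apply]
  push_cast
  have hq0 : (q : ℂ) ≠ 0 := Nat.cast_ne_zero.mpr (NeZero.ne q)
  have h1 : 2 * (Real.pi:ℂ) * Complex.I * n * (j.val / q) / 1
      = ((n * j.val : ℕ) : ℂ) * (2 * (Real.pi:ℂ) * Complex.I / q) := by
    push_cast; field_simp
  rw [h1, Complex.exp_nat_mul, ← zq, zq_pow_natCast]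
  congr 1
  push_cast [ZMod.natCast_rightInverse j]
  ring

lemma fourier_neg_eq_e (j : ZMod q) (n : ℕ) :
    (fourier (-(n:ℤ)) ((j.val / q : ℝ) : UnitAddCircle)) = e (-(j * (n : ZMod q))) := by
  rw [fourier_coe_apply, e_eq_inv_of_neg, ← fourier_eq_e j n, fourier_coe_apply,
    ← Complex.exp_neg]
  congr 1
  push_cast
  ring

lemma hasSum_D {s : ℕ} (hs2 : 2 ≤ s) (hsodd : Odd s) (j : ZMod q) :
    HasSum (fun n : ℕ => (e (j * (n : ZMod q)) - e (-(j * (n : ZMod q)))) / (n : ℂ) ^ s)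
      (-(2 * (Real.pi:ℂ) * Complex.I) ^ s / (Nat.factorial s : ℂ)
        * ((bernoulliFun s (j.val / q) : ℝ) : ℂ)) := by
  have hx : (j.val / q : ℝ) ∈ Set.Icc (0:ℝ) 1 := by
    constructor
    · positivity
    · rw [div_le_one (by exact_mod_cast Nat.pos_of_ne_zero (NeZero.ne q))]
      exact_mod_cast (ZMod.val_lt j).le
  have H := hasSum_one_div_nat_pow_mul_fourier hs2 hx
  have Heq : (fun n : ℕ => (1:ℂ) / (n:ℂ) ^ s * (fourier n ((j.val / q : ℝ) : UnitAddCircle)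
      + (-1:ℂ) ^ s * fourier (-(n:ℤ)) ((j.val / q : ℝ) : UnitAddCircle)))
      = fun n : ℕ => (e (j * (n : ZMod q)) - e (-(j * (n : ZMod q)))) / (n : ℂ) ^ s := by
    funext n
    rw [hsodd.neg_one_pow, fourier_eq_e j n, fourier_neg_eq_e j n]
    ring
  rw [Heq] at H
  exact H

/-- rational Bernoulli coefficient -/
noncomputable def br (q s : ℕ) [NeZero q] (j : ZMod q) : ℚ :=
  if j = 0 then 0 else (Polynomial.bernoulli s).eval ((j.val : ℚ) / q)

noncomputable def κ (s : ℕ) : ℂ :=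
  -(2 * (Real.pi:ℂ) * Complex.I) ^ s / (Nat.factorial s : ℂ)

lemma κ_ne_zero {s : ℕ} : κ s ≠ 0 := by
  unfold κ
  apply div_ne_zero
  · rw [neg_ne_zero]
    apply pow_ne_zero
    simp [Real.pi_ne_zero, Complex.I_ne_zero, Complex.ofReal_ne_zero]
  · exact_mod_cast (Nat.factorial_ne_zero s)

/-- The key algebraic object: `T x = ∑_j br j * e(-(j*x))`. -/
noncomputable def T (q s : ℕ) [NeZero q] (x : ZMod q) : ℂ :=
  ∑ j : ZMod q, (br q s j : ℂ) * e (-(j * x))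

lemma br_cast {s : ℕ} (j : ZMod q) (hj : j ≠ 0) :
    (br q s j : ℂ) = ((bernoulliFun s (j.val / q) : ℝ) : ℂ) := by
  rw [br, if_neg hj, bernoulliFun]
  have hx : ((j.val : ℝ) / q) = algebraMap ℚ ℝ ((j.val : ℚ) / q) := by
    push_cast; norm_num
  rw [hx, Polynomial.eval_map, Polynomial.eval₂_at_apply]
  norm_cast

lemma D_eq {s : ℕ} (hs2 : 2 ≤ s) (hsodd : Odd s) (j : ZMod q) :
    Ej q s j - Ej q s (-j) = κ s * (br q s j : ℂ) := by
  rcases eq_or_ne j 0 with rfl | hj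
  · rw [neg_zero, sub_self, br, if_pos rfl]; simp
  · have h1 := Summable.tsum_sub (summable_Ej hs2 j) (summable_Ej (q := q) hs2 (-j))
    have h2 : (fun n : ℕ => e (j * (n : ZMod q)) / (n : ℂ) ^ s
        - e ((-j) * (n : ZMod q)) / (n : ℂ) ^ s)
        = fun n : ℕ => (e (j * (n : ZMod q)) - e (-(j * (n : ZMod q)))) / (n : ℂ) ^ s := by
      funext n; rw [neg_mul, sub_div]
    rw [Ej, Ej, ← h1, h2, (hasSum_D hs2 hsodd j).tsum_eq, κ, br_cast j hj]

/-- Fourier coefficients of `χ` -/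
noncomputable def w (q : ℕ) [NeZero q] (χ : DirichletCharacter ℂ q) (j : ZMod q) : ℂ :=
  ∑ x : ZMod q, χ x * e (-(j * x))

lemma w_spec (χ : DirichletCharacter ℂ q) (n : ℕ) :
    (q : ℂ) * χ (n : ZMod q) = ∑ j : ZMod q, w q χ j * e (j * (n : ZMod q)) := by
  unfold w
  have h1 : ∀ x : ZMod q, ∀ j : ZMod q,
      χ x * e (-(j * x)) * e (j * (n : ZMod q)) = χ x * e (j * ((n : ZMod q) - x)) := by
    intro x j
    rw [mul_assoc, ← e_add]
    congr 2
    ring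
  refine Eq.symm ?_
  calc ∑ j : ZMod q, (∑ x : ZMod q, χ x * e (-(j * x))) * e (j * (n : ZMod q))
      = ∑ j : ZMod q, ∑ x : ZMod q, χ x * e (-(j * x)) * e (j * (n : ZMod q)) := by
        simp_rw [Finset.sum_mul]
    _ = ∑ x : ZMod q, ∑ j : ZMod q, χ x * e (-(j * x)) * e (j * (n : ZMod q)) :=
        Finset.sum_comm
    _ = ∑ x : ZMod q, χ x * ∑ j : ZMod q, e (j * ((n : ZMod q) - x)) := by
        refine Finset.sum_congr rfl fun x _ => ?_
        rw [Finset.mul_sum]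
        exact Finset.sum_congr rfl fun j _ => h1 x j
    _ = ∑ x : ZMod q, χ x * (if (n : ZMod q) - x = 0 then (q:ℂ) else 0) := by
        simp_rw [sum_e]
    _ = (q : ℂ) * χ (n : ZMod q) := by
        rw [Finset.sum_eq_single ((n : ZMod q))]
        · rw [if_pos (sub_self _), mul_comm]
        · intro b _ hb
          rw [if_neg (fun h => hb (by linear_combination -h)), mul_zero]
        · intro h; exact absurd (Finset.mem_univ _) h

lemma w_neg (χ : DirichletCharacter ℂ q) (hodd : χ (-1) = -1) (j : ZMod q) :
    w q χ (-j) = - w q χ j := by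
  unfold w
  rw [← Finset.sum_neg_distrib]
  refine Fintype.sum_equiv (Equiv.neg (ZMod q)) _ _ fun x => ?_
  simp only [Equiv.neg_apply]
  have h1 : χ (-x) = - χ x := by
    have := map_mul χ (-1) x
    rw [hodd] at this
    rw [show -x = -1 * x by ring, this]; ring
  rw [h1]
  have h3 : -(-j * x) = j * x := by ring
  have h4 : -(j * -x) = j * x := by ring
  rw [h3, h4]
  ring

lemma Lform {s : ℕ} (hs2 : 2 ≤ s) (hsodd : Odd s) (hq : 2 < q)
    (χ : DirichletCharacter ℂ q) (hodd : χ (-1) = -1) :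
    Lval q χ s = κ s / (2 * q) * ∑ x : ZMod q, χ x * T q s x := by
  have hq0 : (q : ℂ) ≠ 0 := Nat.cast_ne_zero.mpr (NeZero.ne q)
  have hL : (q:ℂ) * Lval q χ s = ∑ j : ZMod q, w q χ j * Ej q s j := by
    rw [Lval, ← tsum_mul_left]
    have h1 : ∀ n : ℕ, (q:ℂ) * (χ (n : ZMod q) / (n:ℂ)^s)
        = ∑ j : ZMod q, w q χ j * (e (j * (n : ZMod q)) / (n:ℂ)^s) := by
      intro n
      rw [mul_div_assoc' (q:ℂ), w_spec χ n, Finset.sum_div]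
      exact Finset.sum_congr rfl fun j _ => (mul_div_assoc _ _ _)
    rw [tsum_congr h1, Summable.tsum_finsetSum (fun j _ => (summable_Ej hs2 j).mul_left (w q χ j))]
    exact Finset.sum_congr rfl fun j _ => tsum_mul_left
  have hrev : ∑ j : ZMod q, w q χ j * Ej q s j = ∑ j : ZMod q, w q χ (-j) * Ej q s (-j) :=
    Fintype.sum_equiv (Equiv.neg (ZMod q)) _ _ fun j => by
      simp only [Equiv.neg_apply, neg_neg]
  have h2 : 2 * ((q:ℂ) * Lval q χ s) = ∑ j : ZMod q, w q χ j * (Ej q s j - Ej q s (-j)) := by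
    have : 2 * ((q:ℂ) * Lval q χ s)
        = ∑ j : ZMod q, w q χ j * Ej q s j + ∑ j : ZMod q, w q χ (-j) * Ej q s (-j) := by
      rw [← hrev, hL]; ring
    rw [this, ← Finset.sum_add_distrib]
    refine Finset.sum_congr rfl fun j _ => ?_
    rw [w_neg χ hodd j]
    ring
  have h3 : 2 * ((q:ℂ) * Lval q χ s) = κ s * ∑ x : ZMod q, χ x * T q s x := by
    rw [h2]
    have step : ∀ j : ZMod q, w q χ j * (Ej q s j - Ej q s (-j))
        = κ s * ((br q s j : ℂ) * w q χ j) := by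
      intro j; rw [D_eq hs2 hsodd j]; ring
    rw [Finset.sum_congr rfl fun j _ => step j, ← Finset.mul_sum]
    congr 1
    unfold w T
    simp_rw [Finset.mul_sum]
    rw [Finset.sum_comm]
    refine Finset.sum_congr rfl fun x _ => Finset.sum_congr rfl fun j _ => ?_
    ring
  field_simp at h3 ⊢
  linear_combination h3

lemma hasSum_telescope :
    HasSum (fun n : ℕ => (1:ℝ) / ((n+1) * (n+2))) 1 := by
  have key : ∀ n : ℕ, (1:ℝ) / ((n+1) * (n+2)) = 1/(n+1) - 1/(n+2) := by
    intro n
    have h1 : ((n:ℝ)+1) ≠ 0 := by positivity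
    have h2 : ((n:ℝ)+2) ≠ 0 := by positivity
    field_simp
    ring
  rw [show (fun n : ℕ => (1:ℝ) / ((n+1) * (n+2))) = fun n : ℕ => 1/((n:ℝ)+1) - 1/((n:ℝ)+2)
    from funext key]
  rw [hasSum_iff_tendsto_nat_of_nonneg (fun n => by
    rw [← key n]; positivity)]
  have hps : ∀ N : ℕ, ∑ i ∈ Finset.range N, ((1:ℝ)/((i:ℝ)+1) - 1/((i:ℝ)+2))
      = 1 - 1/((N:ℝ)+1) := by
    intro N
    have h := Finset.sum_range_sub' (fun i : ℕ => (1:ℝ)/((i:ℝ)+1)) N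
    refine Eq.trans (Finset.sum_congr rfl fun i _ => ?_) (h.trans (by norm_num))
    push_cast
    ring
  simp_rw [hps]
  have : Filter.Tendsto (fun N : ℕ => 1/((N:ℝ)+1)) Filter.atTop (nhds 0) :=
    tendsto_one_div_add_atTop_nhds_zero_nat
  simpa using (tendsto_const_nhds (x := (1:ℝ))).sub this

lemma Lval_ne_zero {s : ℕ} (hs3 : 3 ≤ s) (χ : DirichletCharacter ℂ q) :
    Lval q χ s ≠ 0 := by
  set f : ℕ → ℂ := fun n => χ (n : ZMod q) / (n : ℂ) ^ s with hf
  have hsum : Summable f := summable_aux (by omega) _ (fun n => DirichletCharacter.norm_le_one χ _)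
  have hbound : ∀ n : ℕ, ‖f (n+2)‖ ≤ (1:ℝ)/2 * (1 / ((n+1) * (n+2))) := by
    intro n
    rw [hf]
    simp only
    rw [norm_div, norm_pow, Complex.norm_natCast]
    have h0 : (0:ℝ) < ((n:ℝ)+2) := by positivity
    have hc : ((n + 2 : ℕ) : ℝ) = (n:ℝ) + 2 := by push_cast; ring
    rw [hc]
    have hb1 : ‖χ ((n+2 : ℕ) : ZMod q)‖ ≤ 1 := DirichletCharacter.norm_le_one χ _
    have hb2 : ((n:ℝ)+2)^3 ≤ ((n:ℝ)+2)^s := pow_le_pow_right₀ (by linarith) hs3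
    have hb3 : 2 * (((n:ℝ)+1) * ((n:ℝ)+2)) ≤ ((n:ℝ)+2)^3 := by nlinarith [sq_nonneg ((n:ℝ))]
    calc ‖χ ((n+2 : ℕ) : ZMod q)‖ / ((n:ℝ)+2)^s ≤ 1 / ((n:ℝ)+2)^s := by
          apply div_le_div_of_nonneg_right hb1 (by positivity) |>.trans_eq rfl
      _ ≤ 1 / (2 * (((n:ℝ)+1) * ((n:ℝ)+2))) :=
          one_div_le_one_div_of_le (by positivity) (hb3.trans hb2)
      _ = 1/2 * (1 / (((n:ℝ)+1) * ((n:ℝ)+2))) := by rw [div_mul_div_comm]; norm_num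
  have hsumnorm : Summable (fun n : ℕ => ‖f (n+2)‖) := by
    refine Summable.of_nonneg_of_le (fun n => norm_nonneg _) hbound ?_
    exact (hasSum_telescope.mul_left ((1:ℝ)/2)).summable
  have htail : ‖∑' n : ℕ, f (n+2)‖ ≤ 1/2 := by
    calc ‖∑' n : ℕ, f (n+2)‖ ≤ ∑' n : ℕ, ‖f (n+2)‖ := norm_tsum_le_tsum_norm hsumnorm
      _ ≤ ∑' n : ℕ, (1:ℝ)/2 * (1 / ((n+1) * (n+2))) :=
          Summable.tsum_le_tsum hbound hsumnorm (hasSum_telescope.mul_left ((1:ℝ)/2)).summable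
      _ = 1/2 := by rw [(hasSum_telescope.mul_left ((1:ℝ)/2)).tsum_eq]; norm_num
  have hsplit : Lval q χ s = f 0 + (f 1 + ∑' n : ℕ, f (n+2)) := by
    rw [Lval, ← hf]
    have h21 : ∀ n : ℕ, f (n+1+1) = f (n+2) := fun n => by norm_num
    rw [Summable.tsum_eq_zero_add hsum, Summable.tsum_eq_zero_add ((summable_nat_add_iff 1).mpr hsum),
      tsum_congr h21]
  have hf0 : f 0 = 0 := by
    rw [hf]; simp [zero_pow (by omega : s ≠ 0)]
  have hf1 : f 1 = 1 := by
    rw [hf]; simp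
  rw [hsplit, hf0, hf1, zero_add]
  intro hcontra
  have : ‖∑' n : ℕ, f (n+2)‖ = 1 := by
    have h1 : ∑' n : ℕ, f (n+2) = -1 := by linear_combination hcontra
    rw [h1]; simp
  rw [this] at htail
  norm_num at htail

variable (F : IntermediateField ℚ ℂ)

lemma zq_isIntegral : IsIntegral F (zq q) := by
  refine ⟨X ^ q - C 1, monic_X_pow_sub_C 1 (NeZero.ne q), ?_⟩
  simp [hzq.pow_eq_one]

lemma minpoly_zq (hdisj : F ⊓ IntermediateField.adjoin ℚ {zq q} = ⊥) :
    minpoly F (zq q) = cyclotomic q F := by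
  have qpos : 0 < q := Nat.pos_of_ne_zero (NeZero.ne q)
  set ζ := zq q with hζdef
  set m := minpoly F ζ with hm
  have hint : IsIntegral F ζ := zq_isIntegral F
  have hmono : m.Monic := minpoly.monic hint
  have hm0 : m ≠ 0 := hmono.ne_zero
  have hdvd : m ∣ cyclotomic q F := by
    refine minpoly.dvd F ζ ?_
    rw [Polynomial.aeval_def, ← Polynomial.eval_map, Polynomial.map_cyclotomic]
    exact (hzq.isRoot_cyclotomic qpos)
  set mmap := m.map (algebraMap F ℂ) with hmmap
  have hmmapmono : mmap.Monic := hmono.map _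
  have hsplits : Splits mmap :=
    IsAlgClosed.splits mmap
  have hfact : mmap = (Multiset.map (fun a => X - C a) mmap.roots).prod :=
    hsplits.eq_prod_roots_of_monic hmmapmono
  -- roots of mmap are in N
  set N := IntermediateField.adjoin ℚ {ζ} with hN
  have hroots : ∀ r ∈ mmap.roots, r ∈ N := by
    intro r hr
    have hr0 : IsRoot mmap r := isRoot_of_mem_roots hr
    have hdvd2 : mmap ∣ cyclotomic q ℂ := by
      rw [← Polynomial.map_cyclotomic q (algebraMap F ℂ)]
      exact Polynomial.map_dvd _ hdvd
    have hrc : IsRoot (cyclotomic q ℂ) r := hr0.dvd hdvd2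
    have hrq : r ^ q = 1 := by
      have h1 : IsRoot (X ^ q - 1 : ℂ[X]) r :=
        hrc.dvd (cyclotomic.dvd_X_pow_sub_one q ℂ)
      have := h1
      simp only [IsRoot, Polynomial.eval_sub, Polynomial.eval_pow, Polynomial.eval_X,
        Polynomial.eval_one, sub_eq_zero] at this
      exact this
    obtain ⟨i, -, hi⟩ := hzq.eq_pow_of_pow_eq_one hrq
    rw [← hi]
    exact pow_mem (IntermediateField.mem_adjoin_simple_self ℚ ζ) i
  -- mmap lifts to ℚ
  have hlift : ∀ n : ℕ, mmap.coeff n ∈ Set.range (algebraMap ℚ ℂ) := by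
    intro n
    have h1 : mmap ∈ Polynomial.lifts (algebraMap ↥N ℂ) := by
      rw [hfact]
      refine Subsemiring.multiset_prod_mem _ _ (fun p hp => ?_)
      obtain ⟨r, hr, rfl⟩ := Multiset.mem_map.mp hp
      have heq : (X : ℂ[X]) - C r = X + C (-r) := by
        rw [map_neg, ← sub_eq_add_neg]
      rw [heq]
      refine Subsemiring.add_mem _ (Polynomial.X_mem_lifts _) ?_
      have hrr : (-r) = algebraMap ↥N ℂ ⟨-r, neg_mem (hroots r hr)⟩ := rfl
      rw [hrr]
      exact Polynomial.C_mem_lifts _ _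
    have h2 : mmap.coeff n ∈ Set.range (algebraMap ↥N ℂ) :=
      (Polynomial.lifts_iff_coeff_lifts mmap).mp h1 n
    have h3 : mmap.coeff n ∈ N := by
      obtain ⟨a, ha⟩ := h2
      rw [← ha]
      exact a.2
    have h4 : mmap.coeff n ∈ F := by
      rw [hmmap, Polynomial.coeff_map]
      exact (m.coeff n).2
    have h5 : mmap.coeff n ∈ F ⊓ N := IntermediateField.mem_inf.mpr ⟨h4, h3⟩
    rw [hdisj] at h5
    exact IntermediateField.mem_bot.mp h5
  obtain ⟨m₀, hm₀⟩ := (Polynomial.mem_lifts _).mp ((Polynomial.lifts_iff_coeff_lifts mmap).mpr hlift)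
  -- degree bounds
  have hminq : minpoly ℚ ζ = cyclotomic q ℚ := (cyclotomic_eq_minpoly_rat hzq qpos).symm
  have haev : Polynomial.aeval ζ m₀ = 0 := by
    rw [Polynomial.aeval_def, ← Polynomial.eval_map, hm₀, hmmap, Polynomial.eval_map,
      ← Polynomial.aeval_def]
    exact minpoly.aeval F ζ
  have hm₀0 : m₀ ≠ 0 := by
    intro h
    rw [h, Polynomial.map_zero] at hm₀
    exact hmmapmono.ne_zero hm₀.symm
  have hdeg1 : q.totient ≤ m.natDegree := by
    have h1 : minpoly ℚ ζ ∣ m₀ := minpoly.dvd ℚ ζ haev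
    have h2 : (minpoly ℚ ζ).natDegree ≤ m₀.natDegree := Polynomial.natDegree_le_of_dvd h1 hm₀0
    have h3 : (minpoly ℚ ζ).natDegree = q.totient := by
      rw [hminq, Polynomial.natDegree_cyclotomic]
    have h4 : m₀.natDegree = mmap.natDegree := by
      rw [← hm₀]
      exact (Polynomial.natDegree_map_eq_of_injective (algebraMap ℚ ℂ).injective m₀).symm
    have h5 : mmap.natDegree = m.natDegree := hmono.natDegree_map _
    omega
  -- conclude
  obtain ⟨c, hc⟩ := hdvd
  have hcyc0 : (cyclotomic q F) ≠ 0 := (cyclotomic.monic q F).ne_zero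
  have hc0 : c ≠ 0 := by
    intro h; rw [h, mul_zero] at hc; exact hcyc0 hc
  have hdegs : (cyclotomic q F).natDegree = m.natDegree + c.natDegree := by
    rw [hc, Polynomial.natDegree_mul hm0 hc0]
  have hcdeg : c.natDegree = 0 := by
    have := Polynomial.natDegree_cyclotomic q F
    omega
  have hcC : c = C (c.coeff 0) := Polynomial.eq_C_of_natDegree_eq_zero hcdeg
  have hlc : (cyclotomic q F).leadingCoeff = m.leadingCoeff * c.leadingCoeff := by
    rw [hc, Polynomial.leadingCoeff_mul]
  rw [(cyclotomic.monic q F).leadingCoeff, hmono.leadingCoeff, one_mul] at hlc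
  have hone : c = 1 := by
    rw [Polynomial.leadingCoeff, hcdeg] at hlc
    rw [hcC, ← hlc, map_one]
  rw [hc, hone, mul_one]

/-- the subfield `F(ζ)` -/
noncomputable abbrev Fz (q : ℕ) (F : IntermediateField ℚ ℂ) : IntermediateField (↥F) ℂ :=
  F⟮zq q⟯

/-- ζ as an element of `F(ζ)` -/
noncomputable def Z (q : ℕ) [NeZero q] (F : IntermediateField ℚ ℂ) : ↥(Fz q F) :=
  IntermediateField.AdjoinSimple.gen F (zq q)

/-- `T x` as an element of `F(ζ)` -/
noncomputable def TT (q s : ℕ) [NeZero q] (F : IntermediateField ℚ ℂ) (x : ZMod q) :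
    ↥(Fz q F) :=
  ∑ j : ZMod q, (br q s j : ↥(Fz q F)) * (Z q F) ^ (-(j * x)).val

lemma TT_spec (s : ℕ) (x : ZMod q) :
    algebraMap ↥(Fz q F) ℂ (TT q s F x) = T q s x := by
  rw [TT, map_sum, T]
  refine Finset.sum_congr rfl fun j _ => ?_
  rw [map_mul, map_pow, map_ratCast, Z, IntermediateField.AdjoinSimple.algebraMap_gen, e]

lemma root_aux (hdisj : F ⊓ IntermediateField.adjoin ℚ {zq q} = ⊥) (u : (ZMod q)ˣ) :
    Polynomial.aeval ((zq q) ^ ((u : ZMod q)).val)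
      (minpoly (↥F) (IntermediateField.adjoin.powerBasis (zq_isIntegral (q := q) F)).gen) = 0 := by
  rw [IntermediateField.adjoin.powerBasis_gen, IntermediateField.minpoly_gen,
    minpoly_zq F hdisj, Polynomial.aeval_def, ← Polynomial.eval_map, Polynomial.map_cyclotomic]
  exact (hzq.pow_of_coprime _ (ZMod.val_coe_unit_coprime u)).isRoot_cyclotomic
    (Nat.pos_of_ne_zero (NeZero.ne q))

/-- the Galois twist -/
noncomputable def σ (hdisj : F ⊓ IntermediateField.adjoin ℚ {zq q} = ⊥) (u : (ZMod q)ˣ) :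
    ↥(Fz q F) →ₐ[↥F] ℂ :=
  (IntermediateField.adjoin.powerBasis (zq_isIntegral (q := q) F)).lift
    ((zq q) ^ ((u : ZMod q)).val) (root_aux F hdisj u)

lemma σ_Z (hdisj : F ⊓ IntermediateField.adjoin ℚ {zq q} = ⊥) (u : (ZMod q)ˣ) :
    σ F hdisj u (Z q F) = (zq q) ^ ((u : ZMod q)).val := by
  have hgen : (IntermediateField.adjoin.powerBasis (zq_isIntegral (q := q) F)).gen = Z q F :=
    IntermediateField.adjoin.powerBasis_gen _
  rw [σ, ← hgen]
  exact PowerBasis.lift_gen _ _ _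

lemma σ_TT (s : ℕ) (hdisj : F ⊓ IntermediateField.adjoin ℚ {zq q} = ⊥) (u : (ZMod q)ˣ)
    (x : ZMod q) :
    σ F hdisj u (TT q s F x) = T q s ((u : ZMod q) * x) := by
  rw [TT, map_sum, T]
  refine Finset.sum_congr rfl fun j _ => ?_
  rw [map_mul, map_pow, map_ratCast, σ_Z]
  congr 1
  rw [← pow_mul, zq_pow_natCast]
  congr 1
  push_cast [ZMod.natCast_val, ZMod.cast_id]
  ring

lemma sum_units_eq (f : ZMod q → ℂ) (hf : ∀ x : ZMod q, ¬IsUnit x → f x = 0) :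
    ∑ x : ZMod q, f x = ∑ u : (ZMod q)ˣ, f ↑u := by
  classical
  have h1 : ∑ x ∈ Finset.univ.filter (fun x : ZMod q => IsUnit x), f x = ∑ x : ZMod q, f x :=
    Finset.sum_filter_of_ne (fun x _ hfx => by
      by_contra hu; exact hfx (hf x hu))
  rw [← h1]
  refine (Finset.sum_nbij' (fun (u : (ZMod q)ˣ) => (↑u : ZMod q))
    (fun (x : ZMod q) => if h : IsUnit x then h.unit else 1) ?_ ?_ ?_ ?_ ?_).symm
  · intro u _; exact Finset.mem_filter.mpr ⟨Finset.mem_univ _, u.isUnit⟩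
  · intro x _; exact Finset.mem_univ _
  · intro u _
    show (if h : IsUnit (↑u : ZMod q) then h.unit else 1) = u
    rw [dif_pos u.isUnit]
    exact Units.ext (IsUnit.unit_spec u.isUnit)
  · intro x hx
    rcases Finset.mem_filter.mp hx with ⟨-, h⟩
    show ↑(if h : IsUnit x then h.unit else 1) = x
    rw [dif_pos h]
    exact h.unit_spec
  · intro u _; rfl

lemma adjoin_primroot_eq {n : ℕ} [NeZero n] {a b : ℂ} (ha : IsPrimitiveRoot a n)
    (hb : IsPrimitiveRoot b n) :
    IntermediateField.adjoin ℚ {a} = IntermediateField.adjoin ℚ {b} := by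
  have key : ∀ {x y : ℂ}, IsPrimitiveRoot x n → IsPrimitiveRoot y n →
      IntermediateField.adjoin ℚ {x} ≤ IntermediateField.adjoin ℚ {y} := by
    intro x y hx hy
    rw [IntermediateField.adjoin_le_iff, Set.singleton_subset_iff]
    obtain ⟨i, -, hi⟩ := hy.eq_pow_of_pow_eq_one hx.pow_eq_one
    rw [← hi]
    exact pow_mem (IntermediateField.mem_adjoin_simple_self ℚ y) i
  exact le_antisymm (key ha hb) (key hb ha)

lemma char_val_mem (hq0 : q ≠ 0) {ζφ : ℂ} (hζφ : IsPrimitiveRoot ζφ q.totient)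
    (χ : DirichletCharacter ℂ q) (x : ZMod q) :
    χ x ∈ IntermediateField.adjoin ℚ {ζφ} := by
  by_cases hx : IsUnit x
  · haveI : NeZero q.totient := ⟨(Nat.totient_pos.mpr (Nat.pos_of_ne_zero hq0)).ne'⟩
    have hxpow : x ^ q.totient = 1 := by
      have h := ZMod.pow_totient hx.unit
      calc x ^ q.totient = (↑hx.unit : ZMod q) ^ q.totient := by rw [hx.unit_spec]
        _ = ↑(hx.unit ^ q.totient) := by rw [Units.val_pow_eq_pow_val]
        _ = 1 := by rw [h, Units.val_one]
    have hpow : (χ x) ^ q.totient = 1 := by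
      rw [← map_pow, hxpow, map_one]
    obtain ⟨i, -, hi⟩ := hζφ.eq_pow_of_pow_eq_one hpow
    rw [← hi]
    exact pow_mem (IntermediateField.mem_adjoin_simple_self ℚ ζφ) i
  · rw [MulChar.map_nonunit χ hx]; exact zero_mem _

lemma sum_one_char (hq0 : q ≠ 0) :
    ∑ x : ZMod q, (1 : DirichletCharacter ℂ q) x = (q.totient : ℂ) := by
  rw [sum_units_eq _ (fun x hx => MulChar.map_nonunit _ hx)]
  have h2 : ∀ u : (ZMod q)ˣ, (1 : DirichletCharacter ℂ q) ↑u = 1 := fun u =>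
    MulChar.one_apply u.isUnit
  rw [Finset.sum_congr rfl (fun u _ => h2 u), Finset.sum_const, Finset.card_univ,
    ZMod.card_units_eq_totient]
  simp

end OkadaAux

open OkadaAux Complex Polynomial Finset IntermediateField

/-- **Okada.** Let `k ≥ 1` and `q > 2` be natural numbers and `K ⊆ ℂ` a number field with
`K(ζ_{φ(q)}) ∩ ℚ(ζ_q) = ℚ`.  Then the numbers `L(2k+1, χ)`, where `χ` ranges over the odd
Dirichlet characters modulo `q`, are linearly independent over `K(ζ_{φ(q)})`. -/
theorem odd_Lvalues_linear_independent (k q : ℕ) (hk : 1 ≤ k) (hq : 2 < q)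
    (K : IntermediateField ℚ ℂ) [FiniteDimensional ℚ K]
    (ζφ ζq : ℂ) (hζφ : IsPrimitiveRoot ζφ q.totient) (hζq : IsPrimitiveRoot ζq q)
    (hdisj : (K ⊔ IntermediateField.adjoin ℚ {ζφ}) ⊓ IntermediateField.adjoin ℚ {ζq} = ⊥) :
    LinearIndependent ↥(K ⊔ IntermediateField.adjoin ℚ {ζφ})
      (fun χ : {χ : DirichletCharacter ℂ q // χ (-1) = -1} =>
        Lval q χ.1 (2 * k + 1)) := by
  classical
  haveI : NeZero q := ⟨by omega⟩
  set s : ℕ := 2 * k + 1 with hs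
  have hs2 : 2 ≤ s := by omega
  have hs3 : 3 ≤ s := by omega
  have hsodd : Odd s := ⟨k, by omega⟩
  set F : IntermediateField ℚ ℂ := K ⊔ IntermediateField.adjoin ℚ {ζφ} with hF
  have hdisj' : F ⊓ IntermediateField.adjoin ℚ {zq q} = ⊥ := by
    rw [← adjoin_primroot_eq hζq (hzq (q := q))]
    exact hdisj
  rw [Fintype.linearIndependent_iff]
  intro g hg χ₀
  -- the coefficient function
  set d : ZMod q → ℂ :=
    fun x => ∑ χ : {χ : DirichletCharacter ℂ q // χ (-1) = -1}, (g χ : ℂ) * χ.1 x with hd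
  have hd_nonunit : ∀ x : ZMod q, ¬IsUnit x → d x = 0 := by
    intro x hx
    show ∑ χ : {χ : DirichletCharacter ℂ q // χ (-1) = -1}, (g χ : ℂ) * χ.1 x = 0
    refine Finset.sum_eq_zero fun χ _ => ?_
    rw [MulChar.map_nonunit _ hx, mul_zero]
  have hdF : ∀ x : ZMod q, d x ∈ F := by
    intro x
    refine sum_mem fun χ _ => mul_mem (g χ).2 ?_
    exact (SetLike.le_def.mp le_sup_right) (char_val_mem (NeZero.ne q) hζφ χ.1 x)
  -- the basic relation
  have hrel : ∑ x : ZMod q, d x * T q s x = 0 := by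
    have h0 : (0:ℂ) = κ s / (2 * q) * ∑ x : ZMod q, d x * T q s x := by
      calc (0:ℂ) = ∑ χ : {χ : DirichletCharacter ℂ q // χ (-1) = -1}, g χ • Lval q χ.1 s :=
            hg.symm
        _ = ∑ χ : {χ : DirichletCharacter ℂ q // χ (-1) = -1},
              (g χ : ℂ) * (κ s / (2 * q) * ∑ x : ZMod q, χ.1 x * T q s x) := by
            refine Finset.sum_congr rfl fun χ _ => ?_
            rw [Algebra.smul_def, IntermediateField.algebraMap_apply,
              ← Lform hs2 hsodd hq χ.1 χ.2]
        _ = ∑ x : ZMod q, ∑ χ : {χ : DirichletCharacter ℂ q // χ (-1) = -1},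
              κ s / (2 * q) * ((g χ : ℂ) * χ.1 x * T q s x) := by
            rw [Finset.sum_comm]
            refine Finset.sum_congr rfl fun χ _ => ?_
            rw [Finset.mul_sum, Finset.mul_sum]
            refine Finset.sum_congr rfl fun x _ => ?_
            ring
        _ = κ s / (2 * q) * ∑ x : ZMod q, d x * T q s x := by
            rw [Finset.mul_sum]
            refine Finset.sum_congr rfl fun x _ => ?_
            have hdx : d x = ∑ χ : {χ : DirichletCharacter ℂ q // χ (-1) = -1},
                (g χ : ℂ) * χ.1 x := rfl
            rw [hdx, Finset.sum_mul, Finset.mul_sum]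
    have hne : κ s / (2 * (q:ℂ)) ≠ 0 := by
      apply div_ne_zero κ_ne_zero
      have hq0 : (q:ℂ) ≠ 0 := Nat.cast_ne_zero.mpr (NeZero.ne q)
      simp [hq0]
    rcases mul_eq_zero.mp h0.symm with h | h
    · exact absurd h hne
    · exact h
  -- lift to F(ζ) and twist by Galois
  have hrelu : ∀ u : (ZMod q)ˣ, ∑ x : ZMod q, d x * T q s ((u : ZMod q) * x) = 0 := by
    intro u
    have hrelF : ∑ x : ZMod q, (algebraMap ↥F ↥(Fz q F) ⟨d x, hdF x⟩) * TT q s F x = 0 := by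
      apply (algebraMap ↥(Fz q F) ℂ).injective
      rw [map_sum, map_zero]
      rw [← hrel]
      refine Finset.sum_congr rfl fun x _ => ?_
      rw [map_mul, TT_spec, ← IsScalarTower.algebraMap_apply]
      rfl
    have h5 := congrArg (σ F hdisj' u) hrelF
    rw [map_sum, map_zero] at h5
    rw [← h5]
    refine Finset.sum_congr rfl fun x _ => ?_
    rw [map_mul, σ_TT, AlgHom.commutes]
    rfl
  -- extraction with the inverse character
  set ψ : DirichletCharacter ℂ q := (χ₀.1)⁻¹ with hψ
  have hSne : (∑ x : ZMod q, χ₀.1 x * T q s x) ≠ 0 := by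
    intro h
    have hLf := Lform hs2 hsodd hq χ₀.1 χ₀.2
    rw [h, mul_zero] at hLf
    exact Lval_ne_zero hs3 χ₀.1 hLf
  have hcomb : (∑ v : (ZMod q)ˣ, d ↑v * ψ ↑v) * (∑ x : ZMod q, χ₀.1 x * T q s x) = 0 := by
    have h1 : (0:ℂ) = ∑ u : (ZMod q)ˣ, ψ (↑u⁻¹) * ∑ x : ZMod q, d x * T q s (↑u * x) := by
      symm
      refine Finset.sum_eq_zero fun u _ => ?_
      rw [hrelu u, mul_zero]
    have h2 : ∑ u : (ZMod q)ˣ, ψ (↑u⁻¹) * ∑ x : ZMod q, d x * T q s (↑u * x)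
        = ∑ x : ZMod q, d x * ∑ u : (ZMod q)ˣ, ψ (↑u⁻¹) * T q s (↑u * x) := by
      simp only [Finset.mul_sum]
      rw [Finset.sum_comm]
      exact Finset.sum_congr rfl fun x _ => Finset.sum_congr rfl fun u _ => by ring
    have h3 : ∑ x : ZMod q, d x * ∑ u : (ZMod q)ˣ, ψ (↑u⁻¹) * T q s (↑u * x)
        = ∑ v : (ZMod q)ˣ, d ↑v * ∑ u : (ZMod q)ˣ, ψ (↑u⁻¹) * T q s (↑u * ↑v) := by
      refine sum_units_eq (fun x => d x * ∑ u : (ZMod q)ˣ, ψ (↑u⁻¹) * T q s (↑u * x)) ?_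
      intro x hx
      show d x * _ = 0
      rw [hd_nonunit x hx, zero_mul]
    have h4 : ∀ v : (ZMod q)ˣ, (∑ u : (ZMod q)ˣ, ψ (↑u⁻¹) * T q s (↑u * ↑v))
        = ψ ↑v * ∑ w : (ZMod q)ˣ, ψ (↑w⁻¹) * T q s ↑w := by
      intro v
      rw [Finset.mul_sum]
      refine Fintype.sum_equiv (Equiv.mulRight v) _ _ fun u => ?_
      simp only [Equiv.coe_mulRight]
      have e1 : ψ ((↑((u * v)⁻¹)) : ZMod q) = ψ (↑v⁻¹ : ZMod q) * ψ (↑u⁻¹ : ZMod q) := by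
        rw [mul_inv_rev, Units.val_mul, map_mul]
      have e2 : (↑(u * v) : ZMod q) = (↑u : ZMod q) * ↑v := Units.val_mul u v
      have e3 : ψ (↑v : ZMod q) * ψ (↑v⁻¹ : ZMod q) = 1 := by
        rw [← map_mul, ← Units.val_mul, mul_inv_cancel, Units.val_one, map_one]
      rw [e2, e1]
      calc ψ (↑u⁻¹ : ZMod q) * T q s ((↑u : ZMod q) * ↑v)
          = (ψ (↑v : ZMod q) * ψ (↑v⁻¹ : ZMod q)) * (ψ (↑u⁻¹ : ZMod q)
            * T q s ((↑u : ZMod q) * ↑v)) := by rw [e3, one_mul]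
        _ = ψ (↑v : ZMod q) * (ψ (↑v⁻¹ : ZMod q) * ψ (↑u⁻¹ : ZMod q)
            * T q s ((↑u : ZMod q) * ↑v)) := by ring
    have h5 : ∑ v : (ZMod q)ˣ, d ↑v * (ψ ↑v * ∑ w : (ZMod q)ˣ, ψ (↑w⁻¹) * T q s ↑w)
        = (∑ v : (ZMod q)ˣ, d ↑v * ψ ↑v) * ∑ w : (ZMod q)ˣ, ψ (↑w⁻¹) * T q s ↑w := by
      rw [Finset.sum_mul]
      exact Finset.sum_congr rfl fun v _ => by ring
    have hSw : ∑ w : (ZMod q)ˣ, ψ (↑w⁻¹) * T q s ↑w = ∑ x : ZMod q, χ₀.1 x * T q s x := by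
      rw [sum_units_eq (fun x => χ₀.1 x * T q s x) (fun x hx => by
        show χ₀.1 x * T q s x = 0
        rw [MulChar.map_nonunit _ hx, zero_mul])]
      refine Finset.sum_congr rfl fun w _ => ?_
      congr 1
      rw [hψ, MulChar.inv_apply, Ring.inverse_unit, inv_inv]
    calc (∑ v : (ZMod q)ˣ, d ↑v * ψ ↑v) * (∑ x : ZMod q, χ₀.1 x * T q s x)
        = (∑ v : (ZMod q)ˣ, d ↑v * ψ ↑v) * ∑ w : (ZMod q)ˣ, ψ (↑w⁻¹) * T q s ↑w := by
          rw [hSw]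
      _ = ∑ v : (ZMod q)ˣ, d ↑v * ∑ u : (ZMod q)ˣ, ψ (↑u⁻¹) * T q s (↑u * ↑v) := by
          rw [← h5]
          exact Finset.sum_congr rfl fun v _ => by rw [h4 v]
      _ = 0 := by rw [← h3, ← h2, ← h1]
  have hvanish : ∑ v : (ZMod q)ˣ, d ↑v * ψ ↑v = 0 :=
    (mul_eq_zero.mp hcomb).resolve_right hSne
  -- orthogonality
  have hfull : ∑ x : ZMod q, d x * ψ x = 0 := by
    rw [sum_units_eq (fun x => d x * ψ x) (fun x hx => by
      show d x * ψ x = 0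
      rw [hd_nonunit x hx, zero_mul])]
    exact hvanish
  have hexp : ∑ x : ZMod q, d x * ψ x
      = ∑ χ : {χ : DirichletCharacter ℂ q // χ (-1) = -1},
          (g χ : ℂ) * ∑ x : ZMod q, (ψ * χ.1) x := by
    have hterm : ∀ x : ZMod q, d x * ψ x
        = ∑ χ : {χ : DirichletCharacter ℂ q // χ (-1) = -1},
            (g χ : ℂ) * ((ψ * χ.1) x) := by
      intro x
      have hdx : d x = ∑ χ : {χ : DirichletCharacter ℂ q // χ (-1) = -1},
          (g χ : ℂ) * χ.1 x := rfl
      rw [hdx, Finset.sum_mul]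
      refine Finset.sum_congr rfl fun χ _ => ?_
      rw [MulChar.mul_apply]
      ring
    rw [Finset.sum_congr rfl fun x _ => hterm x, Finset.sum_comm]
    exact Finset.sum_congr rfl fun χ _ => by rw [Finset.mul_sum]
  have hinner : ∀ χ : {χ : DirichletCharacter ℂ q // χ (-1) = -1},
      (∑ x : ZMod q, (ψ * χ.1) x) = if χ = χ₀ then (q.totient : ℂ) else 0 := by
    intro χ
    split_ifs with hcc
    · subst hcc
      rw [hψ, inv_mul_cancel]
      exact sum_one_char (NeZero.ne q)
    · refine MulChar.sum_eq_zero_of_ne_one ?_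
      intro hone
      apply hcc
      have : χ.1 = χ₀.1 := by
        have h6 : χ₀.1⁻¹ * χ.1 = 1 := by rw [← hψ]; exact hone
        exact (inv_mul_eq_one.mp h6).symm
      exact Subtype.ext this
  have hfinal : (q.totient : ℂ) * (g χ₀ : ℂ) = 0 := by
    have h7 : ∑ χ : {χ : DirichletCharacter ℂ q // χ (-1) = -1},
        (g χ : ℂ) * (if χ = χ₀ then (q.totient : ℂ) else 0) = 0 := by
      calc ∑ χ : {χ : DirichletCharacter ℂ q // χ (-1) = -1},
            (g χ : ℂ) * (if χ = χ₀ then (q.totient : ℂ) else 0)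
          = ∑ χ : {χ : DirichletCharacter ℂ q // χ (-1) = -1},
            (g χ : ℂ) * ∑ x : ZMod q, (ψ * χ.1) x :=
            Finset.sum_congr rfl fun χ _ => by rw [hinner χ]
        _ = ∑ x : ZMod q, d x * ψ x := hexp.symm
        _ = 0 := hfull
    rw [Finset.sum_eq_single χ₀ (fun χ _ hne => by rw [if_neg hne, mul_zero])
      (fun h => absurd (Finset.mem_univ _) h), if_pos rfl] at h7
    rw [← h7]
    ring
  have htne : (q.totient : ℂ) ≠ 0 := by
    refine Nat.cast_ne_zero.mpr ?_
    exact (Nat.totient_pos.mpr (by omega)).ne'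
  have : (g χ₀ : ℂ) = 0 := by
    rcases mul_eq_zero.mp hfinal with h | h
    · exact absurd h htne
    · exact h
  exact_mod_cast this
end

section
/- Let k > 1 be an integer and let a, q be positive integers with 0 < a/q < 1. Then ζ(k, a/q) + (−1)^k ζ(k, 1 − a/q) = (π^k (−1)^{k−1} / (k−1)!) · cot^{(k−1)}(πa/q). -/
open scoped Real

/-- The Hurwitz zeta value `ζ(k, x) = ∑_{n ≥ 0} 1/(n+x)^k`. -/
noncomputable def hzeta (k : ℕ) (x : ℝ) : ℝ := ∑' n : ℕ, 1 / ((n : ℝ) + x) ^ k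

/-- The `m`-th derivative of the (real) cotangent function. -/
noncomputable def cotIter (m : ℕ) (x : ℝ) : ℝ := iteratedDeriv m Real.cot x

section CotAux

open Set Filter

noncomputable def Tt (k n : ℕ) (y : ℝ) : ℝ :=
  1 / (y + ((n : ℝ) + 1)) ^ k + 1 / (y - ((n : ℝ) + 1)) ^ k

lemma sumInvSq : Summable (fun n : ℕ => 1 / ((n : ℝ) + 1) ^ 2) := by
  have := (summable_nat_add_iff 1).mpr (Real.summable_one_div_nat_pow.mpr (le_refl 2))
  simpa using this

lemma hasDerivAt_one_div_pow (k : ℕ) (hk : 0 < k) {z : ℝ} (hz : z ≠ 0) :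
    HasDerivAt (fun y : ℝ => 1 / y ^ k) (-(k : ℝ) / z ^ (k + 1)) z := by
  have h := (hasDerivAt_pow k z).inv (pow_ne_zero _ hz)
  simp only [one_div]
  refine h.congr_deriv ?_
  rw [div_eq_div_iff (by positivity) (by positivity)]
  have h2 : z ^ (k - 1) * z ^ (k + 1) = (z ^ k) ^ 2 := by
    rw [← pow_add, ← pow_mul]
    congr 1
    omega
  field_simp
  rw [← h2]

lemma hasDerivAt_Tt (k n : ℕ) (hk : 0 < k) {y : ℝ} (h1 : y + ((n : ℝ) + 1) ≠ 0)
    (h2 : y - ((n : ℝ) + 1) ≠ 0) :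
    HasDerivAt (fun y => Tt k n y) (-(k : ℝ) * Tt (k + 1) n y) y := by
  have a1 : HasDerivAt (fun y : ℝ => y + ((n : ℝ) + 1)) 1 y := (hasDerivAt_id y).add_const _
  have a2 : HasDerivAt (fun y : ℝ => y - ((n : ℝ) + 1)) 1 y := (hasDerivAt_id y).sub_const _
  have b1 := (hasDerivAt_one_div_pow k hk h1).comp y a1
  have b2 := (hasDerivAt_one_div_pow k hk h2).comp y a2
  have := b1.add b2
  refine this.congr_deriv ?_
  simp [Tt, Function.comp]
  ring

lemma Tt_one (n : ℕ) {x : ℝ} (h1 : x + ((n : ℝ) + 1) ≠ 0) (h2 : x - ((n : ℝ) + 1) ≠ 0) :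
    Tt 1 n x = -(2 * x) / (((n : ℝ) + 1) ^ 2 - x ^ 2) := by
  have h3 : ((n : ℝ) + 1) ^ 2 - x ^ 2 ≠ 0 := by
    intro h
    have : (((n:ℝ)+1) - x) * (((n:ℝ)+1) + x) = 0 := by ring_nf; linarith [h]
    rcases mul_eq_zero.mp this with h' | h'
    · exact h2 (by linarith)
    · exact h1 (by linarith)
  rw [Tt]
  field_simp
  ring

lemma sum_A (k : ℕ) (hk : 2 ≤ k) {x : ℝ} (hx0 : 0 < x) (hx1 : x ≤ 1) :
    Summable (fun n : ℕ => 1 / ((n : ℝ) + x) ^ k) := by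
  refine Summable.of_nonneg_of_le (fun n => by positivity) (fun n => ?_)
    (sumInvSq.mul_left (1 / x ^ k))
  ·
    have hb : x * ((n : ℝ) + 1) ≤ (n : ℝ) + x := by nlinarith [Nat.cast_nonneg (α := ℝ) n]
    have hb2 : ((n:ℝ) + 1) ^ 2 ≤ ((n:ℝ) + 1) ^ k := by
      apply pow_le_pow_right₀ (by linarith [Nat.cast_nonneg (α := ℝ) n]) hk
    have h1 : x ^ k * ((n : ℝ) + 1) ^ 2 ≤ ((n : ℝ) + x) ^ k := by
      calc x ^ k * ((n:ℝ)+1) ^ 2 ≤ x ^ k * ((n:ℝ)+1) ^ k := by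
            apply mul_le_mul_of_nonneg_left hb2 (by positivity)
        _ = (x * ((n:ℝ)+1)) ^ k := (mul_pow _ _ _).symm
        _ ≤ ((n:ℝ)+x) ^ k := pow_le_pow_left₀ (by positivity) hb k
    rw [one_div, one_div, one_div, ← mul_inv, ← one_div, ← one_div]
    exact one_div_le_one_div_of_le (by positivity) h1

lemma aux_ne₁ (n : ℕ) {x : ℝ} (hx : x ∈ Ioo (0:ℝ) 1) : x + ((n : ℝ) + 1) ≠ 0 := by
  have := hx.1; have : (0:ℝ) ≤ n := Nat.cast_nonneg n; positivity

lemma aux_ne₂ (n : ℕ) {x : ℝ} (hx : x ∈ Ioo (0:ℝ) 1) : x - ((n : ℝ) + 1) ≠ 0 := by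
  have h1 := hx.2; have : (0:ℝ) ≤ n := Nat.cast_nonneg n
  intro h; nlinarith

lemma sum_Tt (k : ℕ) (hk : 1 ≤ k) {x : ℝ} (hx : x ∈ Ioo (0:ℝ) 1) :
    Summable (fun n : ℕ => Tt k n x) := by
  have hx0 := hx.1
  have hx1 := hx.2
  rcases eq_or_lt_of_le hk with h1 | h2
  · -- k = 1
    subst h1
    refine Summable.of_norm_bounded (sumInvSq.mul_left (2 / (1 - x))) (fun n => ?_)
    have hn : (0:ℝ) ≤ n := Nat.cast_nonneg n
    rw [Tt_one n (aux_ne₁ n hx) (aux_ne₂ n hx)]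
    have hsq : (1:ℝ) ≤ ((n:ℝ)+1)^2 := by nlinarith
    have hd : ((n:ℝ)+1)^2 * (1 - x) ≤ ((n:ℝ)+1)^2 - x^2 := by nlinarith
    have hdpos : (0:ℝ) < ((n:ℝ)+1)^2 * (1 - x) :=
      mul_pos (by positivity) (by linarith)
    rw [Real.norm_eq_abs, abs_div, abs_neg, abs_of_nonneg (by positivity : (0:ℝ) ≤ 2*x),
      abs_of_pos (by linarith : (0:ℝ) < ((n:ℝ)+1)^2 - x^2)]
    have hrhs : 2 / (1 - x) * (1 / ((n:ℝ) + 1) ^ 2) = 2 / ((1-x) * ((n:ℝ)+1)^2) := by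
      rw [div_mul_div_comm, mul_one]
    rw [hrhs, div_le_div_iff₀ (by linarith) (by linarith [hdpos])]
    nlinarith [mul_nonneg (mul_nonneg (by linarith : (0:ℝ) ≤ 1-x) (by linarith : (0:ℝ) ≤ 1-x)) (sq_nonneg ((n:ℝ)+1))]
  · -- k ≥ 2
    have hA : Summable (fun n : ℕ => 1 / (x + ((n : ℝ) + 1)) ^ k) := by
      have := sum_A k h2 hx0 (le_of_lt hx1)
      have h' := (summable_nat_add_iff 1).mpr this
      refine h'.congr (fun n => ?_)
      push_cast
      ring_nf
    have hB : Summable (fun n : ℕ => 1 / (x - ((n : ℝ) + 1)) ^ k) := by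
      have h1x : (0:ℝ) < 1 - x := by linarith
      have := sum_A k h2 h1x (by linarith)
      refine (this.mul_left ((-1:ℝ)^k)).congr (fun n => ?_)
      have he : (x - ((n:ℝ)+1))^k = (-1)^k * (((n:ℝ)) + (1 - x))^k := by
        rw [← neg_pow]; congr 1; ring
      simp only [one_div, he, mul_inv, ← inv_pow, inv_neg, inv_one]
    exact hA.add hB

lemma Tt_one_bound {y : ℝ} (hy : y ∈ Ioo (0:ℝ) 1) (n : ℕ) :
    ‖Tt 1 n y‖ ≤ 2 / (1 - y) * (1 / ((n : ℝ) + 1) ^ 2) := by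
  have hy0 := hy.1; have hy1 := hy.2
  have hn : (0:ℝ) ≤ n := Nat.cast_nonneg n
  have hsq : (1:ℝ) ≤ ((n:ℝ)+1)^2 := by nlinarith
  have hd : ((n:ℝ)+1)^2 * (1 - y) ≤ ((n:ℝ)+1)^2 - y^2 := by nlinarith
  have hdpos : (0:ℝ) < ((n:ℝ)+1)^2 * (1 - y) := mul_pos (by positivity) (by linarith)
  rw [Tt_one n (aux_ne₁ n hy) (aux_ne₂ n hy)]
  rw [Real.norm_eq_abs, abs_div, abs_neg, abs_of_nonneg (by positivity : (0:ℝ) ≤ 2*y),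
    abs_of_pos (by linarith : (0:ℝ) < ((n:ℝ)+1)^2 - y^2)]
  have hrhs : 2 / (1 - y) * (1 / ((n:ℝ) + 1) ^ 2) = 2 / ((1-y) * ((n:ℝ)+1)^2) := by
    rw [div_mul_div_comm, mul_one]
  rw [hrhs, div_le_div_iff₀ (by linarith) (by linarith [hdpos])]
  nlinarith [mul_nonneg (mul_nonneg (by linarith : (0:ℝ) ≤ 1-y) (by linarith : (0:ℝ) ≤ 1-y)) (sq_nonneg ((n:ℝ)+1))]

lemma Tt_bound (k : ℕ) (hk : 2 ≤ k) {y : ℝ} (hy : y ∈ Ioo (0:ℝ) 1) (n : ℕ) :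
    ‖Tt k n y‖ ≤ (1 + (1/(1-y))^k) * (1 / ((n : ℝ) + 1) ^ 2) := by
  have hy0 := hy.1; have hy1 := hy.2
  have hn : (0:ℝ) ≤ n := Nat.cast_nonneg n
  have hn1 : (1:ℝ) ≤ (n:ℝ) + 1 := by linarith
  have h1 : |1 / (y + ((n:ℝ)+1)) ^ k| ≤ 1 / ((n:ℝ)+1)^2 := by
    rw [abs_of_nonneg (by positivity)]
    apply one_div_le_one_div_of_le (by positivity)
    calc ((n:ℝ)+1)^2 ≤ ((n:ℝ)+1)^k := pow_le_pow_right₀ hn1 hk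
      _ ≤ (y + ((n:ℝ)+1))^k := pow_le_pow_left₀ (by linarith) (by linarith) k
  have h2 : |1 / (y - ((n:ℝ)+1)) ^ k| ≤ (1/(1-y))^k * (1 / ((n:ℝ)+1)^2) := by
    rw [abs_div, abs_one, abs_pow]
    have habs : |y - ((n:ℝ)+1)| = ((n:ℝ)+1) - y := by
      rw [abs_of_nonpos (by linarith)]; ring
    rw [habs]
    have hb : (1-y) * ((n:ℝ)+1) ≤ ((n:ℝ)+1) - y := by nlinarith
    have hbpos : (0:ℝ) < (1-y) * ((n:ℝ)+1) := mul_pos (by linarith) (by linarith)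
    have key : ((1-y) * ((n:ℝ)+1))^k ≤ (((n:ℝ)+1) - y)^k :=
      pow_le_pow_left₀ (le_of_lt hbpos) hb k
    calc 1 / (((n:ℝ)+1) - y)^k ≤ 1 / ((1-y) * ((n:ℝ)+1))^k :=
          one_div_le_one_div_of_le (by positivity) key
      _ = (1/(1-y))^k * (1 / ((n:ℝ)+1)^k) := by
          rw [div_pow, one_pow, div_mul_div_comm, one_mul, mul_pow]
      _ ≤ (1/(1-y))^k * (1 / ((n:ℝ)+1)^2) := by
          apply mul_le_mul_of_nonneg_left _
            (pow_nonneg (le_of_lt (one_div_pos.mpr (by linarith))) k)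
          apply one_div_le_one_div_of_le (by positivity)
          exact pow_le_pow_right₀ hn1 hk
  calc ‖Tt k n y‖ ≤ |1 / (y + ((n:ℝ)+1)) ^ k| + |1 / (y - ((n:ℝ)+1)) ^ k| := abs_add_le _ _
    _ ≤ 1 / ((n:ℝ)+1)^2 + (1/(1-y))^k * (1 / ((n:ℝ)+1)^2) := add_le_add h1 h2
    _ = (1 + (1/(1-y))^k) * (1 / ((n : ℝ) + 1) ^ 2) := by ring

lemma sum_log {x : ℝ} (hx : x ∈ Ioo (0:ℝ) 1) :
    Summable (fun n : ℕ => Real.log (1 - x^2 / ((n:ℝ)+1)^2)) := by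
  have hx0 := hx.1; have hx1 := hx.2
  refine Summable.of_norm_bounded (sumInvSq.mul_left (x^2 / (1 - x^2))) (fun n => ?_)
  have hn : (0:ℝ) ≤ n := Nat.cast_nonneg n
  have hsq : (1:ℝ) ≤ ((n:ℝ)+1)^2 := by nlinarith
  have ha : x^2 / ((n:ℝ)+1)^2 ≤ x^2 := by
    rw [div_le_iff₀ (by positivity)]; nlinarith [sq_nonneg x]
  have hx2 : x^2 < 1 := by nlinarith
  have hpos : 0 < 1 - x^2 / ((n:ℝ)+1)^2 := by
    have : x^2 / ((n:ℝ)+1)^2 ≤ x^2 := ha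
    linarith
  have hle1 : 1 - x^2 / ((n:ℝ)+1)^2 ≤ 1 := by
    have : (0:ℝ) ≤ x^2 / ((n:ℝ)+1)^2 := by positivity
    linarith
  have hlog_le : Real.log (1 - x^2/((n:ℝ)+1)^2) ≤ 0 :=
    Real.log_nonpos (by linarith) hle1
  have hlb : 1 - (1 - x^2/((n:ℝ)+1)^2)⁻¹ ≤ Real.log (1 - x^2/((n:ℝ)+1)^2) :=
    Real.one_sub_inv_le_log_of_pos hpos
  rw [Real.norm_eq_abs, abs_of_nonpos hlog_le]
  have step : (1 - x^2/((n:ℝ)+1)^2)⁻¹ - 1 ≤ x^2 / (1-x^2) * (1 / ((n:ℝ)+1)^2) := by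
    set a := x^2/((n:ℝ)+1)^2 with ha_def
    have hainv : (1-a)⁻¹ - 1 = a / (1-a) := by
      field_simp
      ring
    rw [hainv]
    have h1a : 1 - x^2 ≤ 1 - a := by linarith
    have : a / (1-a) ≤ a / (1-x^2) := by
      apply div_le_div_of_nonneg_left (by positivity) (by linarith) h1a
    calc a / (1-a) ≤ a / (1-x^2) := this
      _ = x^2 / (1-x^2) * (1 / ((n:ℝ)+1)^2) := by
          rw [ha_def]; field_simp
  linarith

lemma log_sin_eq {x : ℝ} (hx : x ∈ Ioo (0:ℝ) 1) :
    Real.log (Real.sin (π * x)) =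
      Real.log π + Real.log x + ∑' n : ℕ, Real.log (1 - x^2 / ((n:ℝ)+1)^2) := by
  have hx0 := hx.1; have hx1 := hx.2
  have hpi := Real.pi_pos
  have hpix : 0 < π * x := by positivity
  have hsin : 0 < Real.sin (π * x) :=
    Real.sin_pos_of_pos_of_lt_pi hpix (by nlinarith)
  have hfpos : ∀ j : ℕ, 0 < 1 - x^2 / ((j:ℝ)+1)^2 := by
    intro j
    have hj : (0:ℝ) ≤ j := Nat.cast_nonneg j
    have : x^2 / ((j:ℝ)+1)^2 < 1 := by
      rw [div_lt_one (by positivity)]; nlinarith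
    linarith
  have h1 := Real.tendsto_euler_sin_prod x
  have h2 : Filter.Tendsto (fun n : ℕ => ∏ j ∈ Finset.range n, ((1:ℝ) - x^2/((j:ℝ)+1)^2))
      Filter.atTop (nhds (Real.sin (π*x) / (π*x))) := by
    have := h1.div_const (π*x)
    refine this.congr (fun n => ?_)
    rw [mul_comm, mul_div_assoc, div_self (ne_of_gt hpix), mul_one]
  have hq : Real.sin (π*x) / (π*x) ≠ 0 := ne_of_gt (div_pos hsin hpix)
  have h3 := h2.log hq
  have h4 : Filter.Tendsto (fun n : ℕ => ∑ j ∈ Finset.range n, Real.log (1 - x^2/((j:ℝ)+1)^2))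
      Filter.atTop (nhds (Real.log (Real.sin (π*x) / (π*x)))) := by
    refine h3.congr (fun n => ?_)
    exact (Real.log_prod (fun j _ => ne_of_gt (hfpos j)))
  have h5 := (sum_log hx).hasSum.tendsto_sum_nat
  have h6 : ∑' n : ℕ, Real.log (1 - x^2 / ((n:ℝ)+1)^2) = Real.log (Real.sin (π*x) / (π*x)) :=
    tendsto_nhds_unique h5 h4
  rw [h6, Real.log_div (ne_of_gt hsin) (ne_of_gt hpix), Real.log_mul (ne_of_gt hpi) (ne_of_gt hx0)]
  ring


lemma interval_facts {x : ℝ} (hx : x ∈ Ioo (0:ℝ) 1) {y : ℝ}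
    (hy : y ∈ Ioo (x/2) ((1+x)/2)) : y ∈ Ioo (0:ℝ) 1 ∧ 1/(1-y) ≤ 2/(1-x) := by
  obtain ⟨hx0, hx1⟩ := hx
  obtain ⟨hy1, hy2⟩ := hy
  have h1 : y ∈ Ioo (0:ℝ) 1 := ⟨by linarith, by linarith⟩
  refine ⟨h1, ?_⟩
  calc 1/(1-y) ≤ 1/((1-x)/2) := by
        apply one_div_le_one_div_of_le (by linarith) (by linarith)
    _ = 2/(1-x) := one_div_div _ _

lemma mem_t {x : ℝ} (hx : x ∈ Ioo (0:ℝ) 1) : x ∈ Ioo (x/2) ((1+x)/2) :=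
  ⟨by linarith [hx.1], by linarith [hx.2]⟩

lemma key1 {x : ℝ} (hx : x ∈ Ioo (0:ℝ) 1) :
    π * Real.cot (π * x) = 1/x + ∑' n : ℕ, Tt 1 n x := by
  have hx0 := hx.1; have hx1 := hx.2
  have hpi := Real.pi_pos
  have hsin : 0 < Real.sin (π * x) :=
    Real.sin_pos_of_pos_of_lt_pi (by positivity) (by nlinarith)
  -- derivative of the log-sum
  have hder_tsum : HasDerivAt (fun y => ∑' n : ℕ, Real.log (1 - y^2 / ((n:ℝ)+1)^2))
      (∑' n : ℕ, Tt 1 n x) x := by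
    have hg : ∀ (n : ℕ) (y : ℝ), y ∈ Ioo (x/2) ((1+x)/2) →
        HasDerivAt (fun z : ℝ => Real.log (1 - z^2 / ((n:ℝ)+1)^2)) (Tt 1 n y) y := by
      intro n y hy
      obtain ⟨hy01, _⟩ := interval_facts hx hy
      have hy0 := hy01.1; have hy1' := hy01.2
      have hn : (0:ℝ) ≤ n := Nat.cast_nonneg n
      have hcpos : (0:ℝ) < ((n:ℝ)+1)^2 := by positivity
      have hinner_pos : 0 < 1 - y^2 / ((n:ℝ)+1)^2 := by
        have : y^2 / ((n:ℝ)+1)^2 < 1 := by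
          rw [div_lt_one hcpos]; nlinarith
        linarith
      have d1 : HasDerivAt (fun y : ℝ => 1 - y^2 / ((n:ℝ)+1)^2)
          (-(2*y / ((n:ℝ)+1)^2)) y := by
        have := ((hasDerivAt_pow 2 y).div_const (((n:ℝ)+1)^2)).const_sub 1
        simpa using this
      have d2 := (Real.hasDerivAt_log (ne_of_gt hinner_pos)).comp y d1
      refine d2.congr_deriv ?_
      rw [Tt_one n (aux_ne₁ n hy01) (aux_ne₂ n hy01)]
      have hne : ((n:ℝ)+1)^2 - y^2 ≠ 0 := by nlinarith
      field_simp
    have hg' : ∀ (n : ℕ) (y : ℝ), y ∈ Ioo (x/2) ((1+x)/2) →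
        ‖Tt 1 n y‖ ≤ (4/(1-x)) * (1/((n:ℝ)+1)^2) := by
      intro n y hy
      obtain ⟨hy01, hby⟩ := interval_facts hx hy
      calc ‖Tt 1 n y‖ ≤ 2/(1-y) * (1/((n:ℝ)+1)^2) := Tt_one_bound hy01 n
        _ ≤ 4/(1-x) * (1/((n:ℝ)+1)^2) := by
            apply mul_le_mul_of_nonneg_right _ (by positivity)
            have : 2/(1-y) = 2 * (1/(1-y)) := by ring
            rw [this]
            have h4 : 4/(1-x) = 2 * (2/(1-x)) := by ring
            rw [h4]
            linarith [hby]
    exact hasDerivAt_tsum_of_isPreconnected (sumInvSq.mul_left (4/(1-x))) isOpen_Ioo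
      isPreconnected_Ioo hg hg' (mem_t hx) (sum_log hx) (mem_t hx)
  -- derivative of RHS
  have hR : HasDerivAt (fun y : ℝ => Real.log π + Real.log y +
      ∑' n : ℕ, Real.log (1 - y^2 / ((n:ℝ)+1)^2)) (1/x + ∑' n : ℕ, Tt 1 n x) x := by
    have h1 : HasDerivAt (fun y : ℝ => Real.log π + Real.log y) (1/x) x := by
      have := (Real.hasDerivAt_log (ne_of_gt hx0)).const_add (Real.log π)
      simpa [one_div] using this
    exact h1.add hder_tsum
  -- derivative of LHS
  have hL : HasDerivAt (fun y : ℝ => Real.log (Real.sin (π * y)))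
      (π * Real.cot (π * x)) x := by
    have d0 : HasDerivAt (fun y : ℝ => π * y) π x := by
      simpa using (hasDerivAt_id x).const_mul π
    have d1 := (Real.hasDerivAt_sin (π*x)).comp x d0
    have d2 := (Real.hasDerivAt_log (ne_of_gt hsin)).comp x d1
    refine d2.congr_deriv ?_
    rw [Real.cot_eq_cos_div_sin]
    field_simp
  -- transfer
  have heq : (fun y : ℝ => Real.log (Real.sin (π * y))) =ᶠ[nhds x]
      (fun y : ℝ => Real.log π + Real.log y + ∑' n : ℕ, Real.log (1 - y^2 / ((n:ℝ)+1)^2)) :=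
    Filter.eventually_of_mem (isOpen_Ioo.mem_nhds hx) (fun y hy => log_sin_eq hy)
  have hL' : HasDerivAt (fun y : ℝ => Real.log (Real.sin (π * y)))
      (1/x + ∑' n : ℕ, Tt 1 n x) x := hR.congr_of_eventuallyEq heq
  exact hL.unique hL'

lemma hasDerivAt_tsum_Tt (k : ℕ) (hk : 1 ≤ k) {x : ℝ} (hx : x ∈ Ioo (0:ℝ) 1) :
    HasDerivAt (fun y => ∑' n : ℕ, Tt k n y) (-(k:ℝ) * ∑' n : ℕ, Tt (k+1) n x) x := by
  have hx0 := hx.1; have hx1 := hx.2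
  have hg : ∀ (n : ℕ) (y : ℝ), y ∈ Ioo (x/2) ((1+x)/2) →
      HasDerivAt (fun z : ℝ => Tt k n z) (-(k:ℝ) * Tt (k+1) n y) y := by
    intro n y hy
    obtain ⟨hy01, _⟩ := interval_facts hx hy
    exact hasDerivAt_Tt k n (by omega) (aux_ne₁ n hy01) (aux_ne₂ n hy01)
  have hg' : ∀ (n : ℕ) (y : ℝ), y ∈ Ioo (x/2) ((1+x)/2) →
      ‖-(k:ℝ) * Tt (k+1) n y‖ ≤ ((k:ℝ) * (1 + (2/(1-x))^(k+1))) * (1/((n:ℝ)+1)^2) := by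
    intro n y hy
    obtain ⟨hy01, hby⟩ := interval_facts hx hy
    have h1y : (0:ℝ) < 1 - y := by linarith [hy01.2]
    rw [norm_mul, norm_neg, Real.norm_natCast]
    have hb := Tt_bound (k+1) (by omega) hy01 n
    have hmono : (1/(1-y))^(k+1) ≤ (2/(1-x))^(k+1) := by
      apply pow_le_pow_left₀ (le_of_lt (one_div_pos.mpr h1y)) hby
    have h2 : ‖Tt (k+1) n y‖ ≤ (1 + (2/(1-x))^(k+1)) * (1/((n:ℝ)+1)^2) := by
      refine hb.trans ?_
      apply mul_le_mul_of_nonneg_right (by linarith) (by positivity)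
    calc (k:ℝ) * ‖Tt (k+1) n y‖ ≤ (k:ℝ) * ((1 + (2/(1-x))^(k+1)) * (1/((n:ℝ)+1)^2)) :=
          mul_le_mul_of_nonneg_left h2 (Nat.cast_nonneg k)
      _ = ((k:ℝ) * (1 + (2/(1-x))^(k+1))) * (1/((n:ℝ)+1)^2) := by ring
  have := hasDerivAt_tsum_of_isPreconnected
    (sumInvSq.mul_left ((k:ℝ) * (1 + (2/(1-x))^(k+1)))) isOpen_Ioo
    isPreconnected_Ioo hg hg' (mem_t hx) (sum_Tt k hk hx) (mem_t hx)
  refine this.congr_deriv ?_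
  rw [tsum_mul_left]

/-- The function `S k`. -/
noncomputable def Ss (k : ℕ) (x : ℝ) : ℝ := 1 / x ^ k + ∑' n : ℕ, Tt k n x

lemma hasDerivAt_Ss (k : ℕ) (hk : 1 ≤ k) {x : ℝ} (hx : x ∈ Ioo (0:ℝ) 1) :
    HasDerivAt (fun y => Ss k y) (-(k:ℝ) * Ss (k+1) x) x := by
  have h1 := hasDerivAt_one_div_pow k (by omega) (ne_of_gt hx.1)
  have h2 := hasDerivAt_tsum_Tt k hk hx
  have := h1.add h2
  refine this.congr_deriv ?_
  rw [Ss]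
  field_simp
  ring

lemma cot_iteratedDeriv (m : ℕ) :
    ∀ {x : ℝ}, x ∈ Ioo (0:ℝ) 1 →
      iteratedDeriv m Real.cot (π * x)
        = ((-1:ℝ)^m * (Nat.factorial m : ℝ) / π^(m+1)) * Ss (m+1) x := by
  induction m with
  | zero =>
    intro x hx
    rw [iteratedDeriv_zero]
    have h := key1 hx
    have hpi := Real.pi_pos
    rw [Nat.factorial_zero]
    rw [show Ss 1 x = 1/x + ∑' n : ℕ, Tt 1 n x from by rw [Ss, pow_one]]
    rw [← h]
    field_simp
    push_cast
    ring
  | succ m ih =>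
    intro x hx
    have hx0 := hx.1; have hx1 := hx.2
    have hpi := Real.pi_pos
    set c : ℝ := (-1:ℝ)^m * (Nat.factorial m : ℝ) / π^(m+1) with hc
    have hinner : HasDerivAt (fun t : ℝ => t / π) (1/π) (π * x) := by
      simpa [one_div] using (hasDerivAt_id (π * x)).div_const π
    have houter : HasDerivAt (fun y => Ss (m+1) y) (-(((m:ℝ)+1)) * Ss (m+2) x) ((π * x) / π) := by
      rw [mul_div_cancel_left₀ _ (ne_of_gt hpi)]
      have := hasDerivAt_Ss (m+1) (by omega) hx
      convert this using 2
      push_cast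
      ring
    have hcomp : HasDerivAt (fun t : ℝ => c * Ss (m+1) (t/π))
        (c * ((-(((m:ℝ)+1)) * Ss (m+2) x) * (1/π))) (π * x) :=
      by have h2 := houter.comp (π * x) hinner; exact h2.const_mul c
    have heq : (iteratedDeriv m Real.cot) =ᶠ[nhds (π * x)]
        (fun t : ℝ => c * Ss (m+1) (t/π)) := by
      have hU : IsOpen (Ioo (0:ℝ) π) := isOpen_Ioo
      have hmem : π * x ∈ Ioo (0:ℝ) π := ⟨by positivity, by nlinarith⟩
      refine Filter.eventually_of_mem (hU.mem_nhds hmem) (fun t ht => ?_)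
      have ht01 : t / π ∈ Ioo (0:ℝ) 1 := by
        constructor
        · exact div_pos ht.1 hpi
        · rw [div_lt_one hpi]; exact ht.2
      have := ih ht01
      rw [mul_div_cancel₀ _ (ne_of_gt hpi)] at this
      exact this
    rw [iteratedDeriv_succ]
    rw [heq.deriv_eq, hcomp.deriv]
    rw [hc]
    have hfact : (Nat.factorial (m+1) : ℝ) = ((m:ℝ)+1) * (Nat.factorial m : ℝ) := by
      push_cast [Nat.factorial_succ]
      ring
    rw [hfact]
    have hpine : π ≠ 0 := ne_of_gt hpi
    field_simp
    ring

noncomputable def hzeta' (k : ℕ) (x : ℝ) : ℝ := ∑' n : ℕ, 1 / ((n : ℝ) + x) ^ k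

lemma Ss_eq_hzeta (k : ℕ) (hk : 2 ≤ k) {x : ℝ} (hx : x ∈ Ioo (0:ℝ) 1) :
    Ss k x = hzeta' k x + (-1:ℝ)^k * hzeta' k (1-x) := by
  have hx0 := hx.1; have hx1 := hx.2
  have hA : Summable (fun n : ℕ => 1 / (x + ((n : ℝ) + 1)) ^ k) := by
    have := sum_A k hk hx0 (le_of_lt hx1)
    have h' := (summable_nat_add_iff 1).mpr this
    refine h'.congr (fun n => ?_)
    push_cast
    ring_nf
  have hB : Summable (fun n : ℕ => 1 / (x - ((n : ℝ) + 1)) ^ k) := by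
    have h1x : (0:ℝ) < 1 - x := by linarith
    have := sum_A k hk h1x (by linarith)
    refine (this.mul_left ((-1:ℝ)^k)).congr (fun n => ?_)
    have he : (x - ((n:ℝ)+1))^k = (-1)^k * (((n:ℝ)) + (1 - x))^k := by
      rw [← neg_pow]; congr 1; ring
    simp only [one_div, he, mul_inv, ← inv_pow, inv_neg, inv_one]
  have hzx : hzeta' k x = 1 / x ^ k + ∑' n : ℕ, 1 / (x + ((n : ℝ) + 1)) ^ k := by
    rw [hzeta', Summable.tsum_eq_zero_add (sum_A k hk hx0 (le_of_lt hx1))]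
    congr 1
    · norm_num
    · apply tsum_congr
      intro n
      push_cast
      ring_nf
  have hzy : (-1:ℝ)^k * hzeta' k (1-x) = ∑' n : ℕ, 1 / (x - ((n : ℝ) + 1)) ^ k := by
    rw [hzeta', ← tsum_mul_left]
    apply tsum_congr
    intro n
    have he : (x - ((n:ℝ)+1))^k = (-1)^k * (((n:ℝ)) + (1 - x))^k := by
      rw [← neg_pow]; congr 1; ring
    simp only [one_div, he, mul_inv, ← inv_pow, inv_neg, inv_one]
  rw [hzx, hzy, Ss]
  have : ∑' n : ℕ, Tt k n x
      = (∑' n : ℕ, 1 / (x + ((n : ℝ) + 1)) ^ k) + ∑' n : ℕ, 1 / (x - ((n : ℝ) + 1)) ^ k :=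
    Summable.tsum_add hA hB
  rw [this]
  ring

theorem hzeta_add_eq_cotIter' (k a q : ℕ) (hk : 1 < k) (ha : 0 < a) (hq : 0 < q)
    (haq : a < q) :
    hzeta' k ((a : ℝ) / q) + (-1 : ℝ) ^ k * hzeta' k (1 - (a : ℝ) / q)
      = π ^ k * (-1 : ℝ) ^ (k - 1) / (Nat.factorial (k - 1) : ℝ)
        * iteratedDeriv (k - 1) Real.cot (π * a / q) := by
  have hpi := Real.pi_pos
  have hq0 : (0:ℝ) < q := by exact_mod_cast hq
  have ha0 : (0:ℝ) < a := by exact_mod_cast ha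
  have haq' : (a:ℝ) < q := by exact_mod_cast haq
  set x : ℝ := (a:ℝ)/q with hxdef
  have hx : x ∈ Ioo (0:ℝ) 1 := ⟨div_pos ha0 hq0, (div_lt_one hq0).mpr haq'⟩
  have harg : π * (a:ℝ) / (q:ℝ) = π * x := by rw [hxdef, mul_div_assoc]
  rw [harg]
  have hiter := cot_iteratedDeriv (k-1) hx
  have hkk : (k - 1) + 1 = k := by omega
  rw [hkk] at hiter
  rw [hiter, ← Ss_eq_hzeta k (by omega) hx]
  have hfac : (0:ℝ) < (Nat.factorial (k-1) : ℝ) := by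
    exact_mod_cast Nat.factorial_pos (k-1)
  have hsign : ((-1:ℝ)^(k-1)) * ((-1:ℝ)^(k-1)) = 1 := by
    rw [← pow_add]
    exact Even.neg_one_pow ⟨k-1, rfl⟩
  field_simp
  linear_combination (-(Ss k x)) * hsign

end CotAux

/-- Let `k > 1` and let `a, q` be positive integers with `0 < a/q < 1`.  Then
`ζ(k, a/q) + (−1)^k ζ(k, 1 − a/q) = (π^k (−1)^{k−1}/(k−1)!) · cot^{(k−1)}(πa/q)`. -/
theorem hzeta_add_eq_cotIter (k a q : ℕ) (hk : 1 < k) (ha : 0 < a) (hq : 0 < q)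
    (haq : a < q) :
    hzeta k ((a : ℝ) / q) + (-1 : ℝ) ^ k * hzeta k (1 - (a : ℝ) / q)
      = π ^ k * (-1 : ℝ) ^ (k - 1) / (Nat.factorial (k - 1) : ℝ) * cotIter (k - 1) (π * a / q) := by
  have h := hzeta_add_eq_cotIter' k a q hk ha hq haq
  simpa only [hzeta, hzeta', cotIter] using h
end
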